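/- Let k ≥ 2 be an integer and let G be a k-connected (K₂ ∪ kK₁)-free graph. Then G is 1-tough if and only if α(G) ≤ |V(G)|/2. -/

import Mathlib

open SimpleGraph

variable {V : Type*}

/-- The number of connected components after deleting the vertex set `S`. -/
noncomputable def omegaDel [Fintype V] (G : SimpleGraph V) (S : Finset V) : ℕ :=
  Nat.card ((G.induce ((S : Set V)ᶜ)).ConnectedComponent)

/-- `G` is `m`-connected. -/
def IsKConn [Fintype V] (G : SimpleGraph V) (m : ℕ) : Prop :=
  m < Fintype.card V ∧ ∀ S : Finset V, S.card < m → (G.induce ((S : Set V)ᶜ)).Connected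

/-- The independence number of `G`. -/
noncomputable def alphaNum [Fintype V] (G : SimpleGraph V) : ℕ :=
  sSup {n | ∃ s : Finset V, (∀ a ∈ s, ∀ b ∈ s, ¬ G.Adj a b) ∧ s.card = n}

/-- The minimum degree of `G`. -/
noncomputable def minDeg [Fintype V] (G : SimpleGraph V) : ℕ :=
  sInf {d | ∃ v : V, (G.neighborSet v).ncard = d}

/-- The graph `K₂ ∪ kK₁`. -/
def K2kK1 (k : ℕ) : SimpleGraph (Fin 2 ⊕ Fin k) :=
  SimpleGraph.fromRel fun a b => a.isLeft ∧ b.isLeft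

/-- `G` contains no induced copy of `H`. -/
def IndFree {W : Type*} (H : SimpleGraph W) (G : SimpleGraph V) : Prop :=
  IsEmpty (H ↪g G)

/-- `G` has a hamiltonian cycle. -/
def Ham [DecidableEq V] (G : SimpleGraph V) : Prop :=
  ∃ (a : V) (p : G.Walk a a), p.IsHamiltonianCycle

/-- `G` is hamiltonian-connected. -/
def HamConn [DecidableEq V] (G : SimpleGraph V) : Prop :=
  ∀ a b : V, a ≠ b → ∃ p : G.Walk a b, p.IsHamiltonian

/-- The Petersen graph. -/
def petersen : SimpleGraph (ZMod 5 ⊕ ZMod 5) :=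
  SimpleGraph.fromRel fun a b =>
    match a, b with
    | Sum.inl i, Sum.inl j => i = j + 1
    | Sum.inr i, Sum.inr j => i = j + 2
    | Sum.inl i, Sum.inr j => i = j
    | _, _ => False

private lemma card_cc_of_edgeless {X : Type*} (H : SimpleGraph X)
    (h : ∀ a b, ¬ H.Adj a b) : Nat.card H.ConnectedComponent = Nat.card X := by
  have hb : Function.Bijective (H.connectedComponentMk) := by
    constructor
    · intro a b hab
      obtain ⟨p⟩ := SimpleGraph.ConnectedComponent.exact hab
      cases p with
      | nil => rfl
      | cons h' _ => exact absurd h' (h _ _)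
    · exact fun c => c.exists_rep
  exact (Nat.card_eq_of_bijective _ hb).symm

private lemma card_cc_of_connected {X : Type*} (H : SimpleGraph X) (h : H.Connected) :
    Nat.card H.ConnectedComponent = 1 := by
  have : Nonempty X := h.nonempty
  rw [Nat.card_eq_one_iff_unique]
  refine ⟨⟨?_⟩, ⟨H.connectedComponentMk (Classical.arbitrary X)⟩⟩
  intro a b
  refine SimpleGraph.ConnectedComponent.ind₂ (fun u v => ?_) a b
  exact SimpleGraph.ConnectedComponent.sound (h.preconnected u v)

private lemma alpha_bdd [Fintype V] (G : SimpleGraph V) :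
    BddAbove {n | ∃ s : Finset V, (∀ a ∈ s, ∀ b ∈ s, ¬ G.Adj a b) ∧ s.card = n} := by
  refine ⟨Fintype.card V, fun n hn => ?_⟩
  obtain ⟨s, _, rfl⟩ := hn
  exact s.card_le_univ

private lemma le_alphaNum' [Fintype V] (G : SimpleGraph V) {s : Finset V}
    (hs : ∀ a ∈ s, ∀ b ∈ s, ¬ G.Adj a b) : s.card ≤ alphaNum G :=
  le_csSup (alpha_bdd G) ⟨s, hs, rfl⟩

private lemma exists_alpha_set [Fintype V] (G : SimpleGraph V) :
    ∃ s : Finset V, (∀ a ∈ s, ∀ b ∈ s, ¬ G.Adj a b) ∧ s.card = alphaNum G := by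
  have := Nat.sSup_mem (s := {n | ∃ s : Finset V, (∀ a ∈ s, ∀ b ∈ s, ¬ G.Adj a b) ∧ s.card = n})
    ⟨0, ∅, by simp, by simp⟩ (alpha_bdd G)
  obtain ⟨s, hs, hcard⟩ := this
  exact ⟨s, hs, hcard⟩

/-- A `k`-connected `(K₂ ∪ kK₁)`-free graph is 1-tough iff `α(G) ≤ |V(G)|/2`. -/
theorem stmt_4 {V : Type*} [Fintype V] (k : ℕ) (hk : 2 ≤ k) (G : SimpleGraph V)
    (hconn : IsKConn G k) (hfree : IndFree (K2kK1 k) G) :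
    (∀ S : Finset V, 2 ≤ omegaDel G S → omegaDel G S ≤ S.card) ↔
      (alphaNum G : ℝ) ≤ (Fintype.card V : ℝ) / 2 := by
  classical
  have hn3 : 3 ≤ Fintype.card V := by have := hconn.1; omega
  constructor
  · intro htough
    obtain ⟨s, hs, hcard⟩ := exists_alpha_set G
    by_cases h1 : alphaNum G ≤ 1
    · rw [le_div_iff₀ (by norm_num : (0:ℝ) < 2)]
      have : (alphaNum G : ℝ) ≤ 1 := by exact_mod_cast h1
      have h3 : (3:ℝ) ≤ (Fintype.card V : ℝ) := by exact_mod_cast hn3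
      linarith
    · push_neg at h1
      have hsets : ((((sᶜ : Finset V) : Set V))ᶜ : Set V) = (s : Set V) := by
        rw [Finset.coe_compl, compl_compl]
      have hedgeless : ∀ a b : ((((sᶜ : Finset V) : Set V))ᶜ : Set V),
          ¬ (G.induce ((((sᶜ : Finset V) : Set V))ᶜ)).Adj a b := by
        intro a b hab
        have hA : (↑a : V) ∈ s := by simpa using a.2
        have hB : (↑b : V) ∈ s := by simpa using b.2
        exact hs _ hA _ hB (by simpa using hab)
      have homega : omegaDel G sᶜ = s.card := by
        unfold omegaDel
        rw [card_cc_of_edgeless _ hedgeless, hsets, Nat.card_coe_set_eq,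
          Set.ncard_coe_finset]
      have h2 : 2 ≤ omegaDel G sᶜ := by omega
      have := htough sᶜ h2
      rw [homega] at this
      have hsum := Finset.card_add_card_compl s
      rw [le_div_iff₀ (by norm_num : (0:ℝ) < 2)]
      have h2n : alphaNum G * 2 ≤ Fintype.card V := by omega
      exact_mod_cast h2n
  · intro hα S hω2
    by_contra hgt
    push_neg at hgt
    -- `hgt : S.card < omegaDel G S`
    set W : Set V := ((S : Set V))ᶜ with hW
    set H := G.induce W with hH
    -- Step 1: `k ≤ S.card`
    have hSk : k ≤ S.card := by
      by_contra hlt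
      push_neg at hlt
      have hc := hconn.2 S hlt
      have h1 : omegaDel G S = 1 := card_cc_of_connected _ hc
      omega
    -- Step 2: the induced graph on `W` has no edges
    have hedge : ∀ a b : W, ¬ H.Adj a b := by
      by_contra hne
      push_neg at hne
      obtain ⟨u, v, huv⟩ := hne
      have hguv : G.Adj ↑u ↑v := huv
      have hmkuv : H.connectedComponentMk u = H.connectedComponentMk v :=
        SimpleGraph.ConnectedComponent.connectedComponentMk_eq_of_adj huv
      set c0 := H.connectedComponentMk u with hc0
      have hcc : S.card < Nat.card H.ConnectedComponent := hgt
      haveI : Fintype H.ConnectedComponent := Fintype.ofFinite _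
      have hcard : k + 1 ≤ Fintype.card H.ConnectedComponent := by
        rw [← Nat.card_eq_fintype_card]; omega
      have hT : ∃ T : Finset H.ConnectedComponent, T.card = k ∧ c0 ∉ T := by
        have h1 : k ≤ (Finset.univ.erase c0).card := by
          rw [Finset.card_erase_of_mem (Finset.mem_univ _), Finset.card_univ]
          omega
        obtain ⟨T, hTsub, hTcard⟩ := Finset.exists_subset_card_eq h1
        exact ⟨T, hTcard, fun h => (Finset.mem_erase.mp (hTsub h)).1 rfl⟩
      obtain ⟨T, hTcard, hTc0⟩ := hT
      have hrepex : ∀ c : H.ConnectedComponent, ∃ x : W, H.connectedComponentMk x = c :=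
        fun c => c.exists_rep
      choose rep hrep using hrepex
      let e : Fin k ≃ T :=
        (Fintype.equivFinOfCardEq (by rw [Fintype.card_coe, hTcard])).symm
      -- non-adjacency from distinct components
      have hnadj : ∀ a b : W, H.connectedComponentMk a ≠ H.connectedComponentMk b →
          ¬ G.Adj ↑a ↑b := by
        intro a b hne hadj
        exact hne (SimpleGraph.ConnectedComponent.connectedComponentMk_eq_of_adj
          (hadj : H.Adj a b))
      have hmk : ∀ i : Fin k, H.connectedComponentMk (rep ↑(e i)) = ↑(e i) :=
        fun i => hrep _
      have hne0 : ∀ i : Fin k, H.connectedComponentMk (rep ↑(e i)) ≠ c0 := by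
        intro i h
        exact hTc0 (by rw [← h, hmk i] at *; exact (h ▸ (e i).2))
      have hnev : ∀ i : Fin k, H.connectedComponentMk (rep ↑(e i)) ≠
          H.connectedComponentMk v := by
        intro i h; exact hne0 i (by rw [h, ← hmkuv])
      have hrepne : ∀ i j : Fin k, i ≠ j → rep ↑(e i) ≠ rep ↑(e j) := by
        intro i j hij h
        apply hij
        have : (↑(e i) : H.ConnectedComponent) = ↑(e j) := by
          rw [← hmk i, ← hmk j, h]
        exact e.injective (Subtype.ext this)
      set f : Fin 2 ⊕ Fin k → V :=
        Sum.elim (fun i : Fin 2 => if i = 0 then (↑u : V) else ↑v)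
          (fun i : Fin k => (↑(rep ↑(e i)) : V)) with hf
      have hfinj : Function.Injective f := by
        have huvne : (↑u : V) ≠ ↑v := hguv.ne
        rintro (a | a) (b | b) hab
        · simp only [hf, Sum.elim_inl] at hab
          fin_cases a <;> fin_cases b <;> simp_all
        · exfalso
          simp only [hf, Sum.elim_inl, Sum.elim_inr] at hab
          by_cases ha : a = 0
        
          · rw [if_pos ha] at hab
            exact hne0 b (by rw [Subtype.ext hab.symm, hc0])
          · rw [if_neg ha] at hab
            exact hnev b (by rw [Subtype.ext hab.symm])
        · exfalso
          simp only [hf, Sum.elim_inl, Sum.elim_inr] at hab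
          by_cases hb : b = 0
          · rw [if_pos hb] at hab
            exact hne0 a (by rw [Subtype.ext hab, hc0])
          · rw [if_neg hb] at hab
            exact hnev a (by rw [Subtype.ext hab])
        · simp only [hf, Sum.elim_inr] at hab
          by_contra hne
          exact hrepne a b (fun h => hne (by rw [h])) (Subtype.ext hab)
      have hadj_iff : ∀ a b : Fin 2 ⊕ Fin k,
          G.Adj (f a) (f b) ↔ (K2kK1 k).Adj a b := by
        have hK : ∀ a b : Fin 2 ⊕ Fin k, (K2kK1 k).Adj a b ↔
            a ≠ b ∧ a.isLeft = true ∧ b.isLeft = true := by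
          intro a b
          constructor
          · rintro ⟨hne, (⟨h1, h2⟩ | ⟨h1, h2⟩)⟩ <;> exact ⟨hne, by simp_all⟩
          · rintro ⟨hne, h1, h2⟩; exact ⟨hne, Or.inl ⟨h1, h2⟩⟩
        rintro (a | a) (b | b)
        · rw [hK]
          simp only [hf, Sum.elim_inl, Sum.isLeft_inl, and_true, ne_eq,
            Sum.inl.injEq]
          constructor
          · intro h
            intro hab; rw [hab] at h; exact G.irrefl h
          · intro hne
            fin_cases a <;> fin_cases b <;> simp_all <;>
              first
                | exact hguv
                | exact hguv.symm
        · rw [hK]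
          simp only [Sum.isLeft_inr]
          constructor
          · intro h
            exfalso
            simp only [hf, Sum.elim_inl, Sum.elim_inr] at h
            by_cases ha : a = 0
            · rw [if_pos ha] at h
              exact hnadj u (rep ↑(e b)) (fun hc => hne0 b hc.symm) h
            · rw [if_neg ha] at h
              exact hnadj v (rep ↑(e b)) (fun hc => hnev b hc.symm) h
          · rintro ⟨-, -, h⟩; simp at h
        · rw [hK]
          simp only [Sum.isLeft_inr]
          constructor
          · intro h
            exfalso
            simp only [hf, Sum.elim_inl, Sum.elim_inr] at h
            by_cases hb : b = 0
            · rw [if_pos hb] at h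
              exact hnadj (rep ↑(e a)) u (hne0 a) h
            · rw [if_neg hb] at h
              exact hnadj (rep ↑(e a)) v (hnev a) h
          · rintro ⟨-, h, -⟩; simp at h
        · rw [hK]
          simp only [Sum.isLeft_inr]
          constructor
          · intro h
            exfalso
            simp only [hf, Sum.elim_inr] at h
            by_cases hab : a = b
            · rw [hab] at h; exact G.irrefl h
            · refine hnadj (rep ↑(e a)) (rep ↑(e b)) ?_ h
              rw [hmk a, hmk b]
              intro hc
              exact hab (e.injective (Subtype.ext hc))
          · rintro ⟨-, h, -⟩; simp at h
      exact hfree.false ⟨⟨f, hfinj⟩, fun {a b} => hadj_iff a b⟩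
    -- Step 3: counting
    have hcnt : omegaDel G S = Nat.card W := card_cc_of_edgeless _ hedge
    have hWcard : Nat.card W = Sᶜ.card := by
      rw [Nat.card_coe_set_eq, hW, ← Finset.coe_compl, Set.ncard_coe_finset]
    have hind : ∀ a ∈ Sᶜ, ∀ b ∈ Sᶜ, ¬ G.Adj a b := by
      intro a ha b hb hab
      have haW : a ∈ W := by simpa [hW] using Finset.mem_compl.mp ha
      have hbW : b ∈ W := by simpa [hW] using Finset.mem_compl.mp hb
      exact hedge ⟨a, haW⟩ ⟨b, hbW⟩ hab
    have halpha : Sᶜ.card ≤ alphaNum G := le_alphaNum' G hind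
    have hsum := Finset.card_add_card_compl S
    have h2a : alphaNum G * 2 ≤ Fintype.card V := by
      have h := hα
      rw [le_div_iff₀ (by norm_num : (0:ℝ) < 2)] at h
      exact_mod_cast h
    omega
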